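/- With 𝒜 and 𝒢*_n(Q) as above (case F = ∅), the map φ : 𝒢*_n(Q) → 𝒜 defined on generators by φ(h_v) = a_v − Σ_{e ∋ v} a_{e,v}, φ(g_e) = g_e, φ(g_e*) = g_e*, extended by linearity and multiplicativity, is a chain map of dg-algebras, and the composition τ ∘ φ equals the identity on 𝒢*_n(Q). -/

import Mathlib

/-- With the Chekanov–Eliashberg dg-algebra `𝒜` and the Ginzburg algebra
`𝒢*_n(Q)` as in Statement 3 (case `F = ∅`), the algebra map `φ : 𝒢*_n(Q) → 𝒜` determined by
`φ(h_v) = a_v − ∑_{e ∋ v} a_{e,v}`, `φ(g_e) = g_e`, `φ(g_e*) = g_e*` is a chain map of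
dg-algebras (degree preserving and commuting with the differentials), and `τ ∘ φ` is the
identity on `𝒢*_n(Q)`. -/
theorem phi_is_chain_map_and_tau_phi_id
    {k AA AG : Type*} [Field k] [Ring AA] [Algebra k AA] [Ring AG] [Algebra k AG]
    (𝒜 : ℤ → Submodule k AA) [GradedAlgebra 𝒜]
    (𝒢 : ℤ → Submodule k AG) [GradedAlgebra 𝒢] (n : ℤ)
    (V E : Type*) [Fintype E] [DecidableEq V]
    (s t : E → V)
    -- the Chekanov–Eliashberg dg-algebra 𝒜
    (idemA : V → AA) (a : V → AA) (a1 a2 b1 b2 gA gsA : E → AA)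
    (hidemAdeg : ∀ v, idemA v ∈ 𝒜 0)
    (hadeg : ∀ v, a v ∈ 𝒜 (1 - n))
    (ha1deg : ∀ e, a1 e ∈ 𝒜 (1 - n)) (ha2deg : ∀ e, a2 e ∈ 𝒜 (1 - n))
    (hb1deg : ∀ e, b1 e ∈ 𝒜 (2 - n)) (hb2deg : ∀ e, b2 e ∈ 𝒜 (2 - n))
    (hgAdeg : ∀ e, gA e ∈ 𝒜 0) (hgsAdeg : ∀ e, gsA e ∈ 𝒜 (2 - n))
    (hgenA : Algebra.adjoin k
        (Set.range idemA ∪ Set.range a ∪ Set.range a1 ∪ Set.range a2 ∪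
          Set.range b1 ∪ Set.range b2 ∪ Set.range gA ∪ Set.range gsA) = ⊤)
    (dA : AA →ₗ[k] AA)
    (hdADeg : ∀ i : ℤ, ∀ x ∈ 𝒜 i, dA x ∈ 𝒜 (i + 1))
    (hLeibA : ∀ (i : ℤ) (x y : AA), x ∈ 𝒜 i →
        dA (x * y) = dA x * y + (Int.negOnePow i : ℤ) • (x * dA y))
    (hdAidem : ∀ v, dA (idemA v) = 0)
    (hdAa : ∀ v, dA (a v) =
        (∑ e ∈ Finset.univ.filter (fun e => s e = v), b1 e) +
        (∑ e ∈ Finset.univ.filter (fun e => t e = v), b2 e))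
    (hdAa1 : ∀ e, dA (a1 e) = b1 e - gA e * gsA e)
    (hdAa2 : ∀ e, dA (a2 e) = b2 e + gsA e * gA e)
    (hdAb1 : ∀ e, dA (b1 e) = 0) (hdAb2 : ∀ e, dA (b2 e) = 0)
    (hdAg : ∀ e, dA (gA e) = 0) (hdAgs : ∀ e, dA (gsA e) = 0)
    -- the n-dimensional Ginzburg algebra 𝒢*_n(Q)
    (idem : V → AG) (g : E → AG) (gs : E → AG) (h : V → AG)
    (hidemdeg : ∀ v, idem v ∈ 𝒢 0)
    (hgdeg : ∀ e, g e ∈ 𝒢 0) (hgsdeg : ∀ e, gs e ∈ 𝒢 (2 - n))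
    (hhdeg : ∀ v, h v ∈ 𝒢 (1 - n))
    (hgenG : Algebra.adjoin k
        (Set.range idem ∪ Set.range g ∪ Set.range gs ∪ Set.range h) = ⊤)
    (dG : AG →ₗ[k] AG)
    (hdGDeg : ∀ i : ℤ, ∀ x ∈ 𝒢 i, dG x ∈ 𝒢 (i + 1))
    (hLeibG : ∀ (i : ℤ) (x y : AG), x ∈ 𝒢 i →
        dG (x * y) = dG x * y + (Int.negOnePow i : ℤ) • (x * dG y))
    (hdGidem : ∀ v, dG (idem v) = 0)
    (hdGg : ∀ e, dG (g e) = 0) (hdGgs : ∀ e, dG (gs e) = 0)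
    (hdGh : ∀ v, dG (h v) =
        (∑ e ∈ Finset.univ.filter (fun e => s e = v), g e * gs e) -
        (∑ e ∈ Finset.univ.filter (fun e => t e = v), gs e * g e))
    -- the map τ : 𝒜 → 𝒢*_n(Q), determined by its values on generators
    (τ : AA →ₐ[k] AG)
    (hτidem : ∀ v, τ (idemA v) = idem v)
    (hτa : ∀ v, τ (a v) = h v)
    (hτa1 : ∀ e, τ (a1 e) = 0) (hτa2 : ∀ e, τ (a2 e) = 0)
    (hτb1 : ∀ e, τ (b1 e) = g e * gs e)
    (hτb2 : ∀ e, τ (b2 e) = -(gs e * g e))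
    (hτg : ∀ e, τ (gA e) = g e) (hτgs : ∀ e, τ (gsA e) = gs e)
    -- the map φ : 𝒢*_n(Q) → 𝒜, determined by its values on generators
    (φ : AG →ₐ[k] AA)
    (hφidem : ∀ v, φ (idem v) = idemA v)
    (hφh : ∀ v, φ (h v) = a v -
        ((∑ e ∈ Finset.univ.filter (fun e => s e = v), a1 e) +
         (∑ e ∈ Finset.univ.filter (fun e => t e = v), a2 e)))
    (hφg : ∀ e, φ (g e) = gA e) (hφgs : ∀ e, φ (gs e) = gsA e)
    :
    (∀ i : ℤ, ∀ x ∈ 𝒢 i, φ x ∈ 𝒜 i) ∧ (∀ x : AG, φ (dG x) = dA (φ x)) ∧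
      (∀ x : AG, τ (φ x) = x) := by
  classical
  have h1G : (1 : AG) ∈ 𝒢 0 := SetLike.one_mem_graded 𝒢
  have h1A : (1 : AA) ∈ 𝒜 0 := SetLike.one_mem_graded 𝒜
  have hdG1 : dG (1 : AG) = 0 := by
    have h := hLeibG 0 1 1 h1G
    simp only [mul_one, one_mul, Int.negOnePow_zero, Units.val_one, one_smul] at h
    exact (left_eq_add.mp h)
  have hdA1 : dA (1 : AA) = 0 := by
    have h := hLeibA 0 1 1 h1A
    simp only [mul_one, one_mul, Int.negOnePow_zero, Units.val_one, one_smul] at h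
    exact (left_eq_add.mp h)
  -- the submodules of "good homogeneous" elements
  let M : ℤ → Submodule k AG := fun i =>
    { carrier := {x | x ∈ 𝒢 i ∧ φ x ∈ 𝒜 i ∧ φ (dG x) = dA (φ x) ∧ τ (φ x) = x}
      add_mem' := by
        rintro x y ⟨hx1, hx2, hx3, hx4⟩ ⟨hy1, hy2, hy3, hy4⟩
        exact ⟨add_mem hx1 hy1, by rw [map_add]; exact add_mem hx2 hy2,
          by rw [map_add, map_add, map_add, map_add, hx3, hy3],
          by rw [map_add, map_add, hx4, hy4]⟩
      zero_mem' := ⟨zero_mem _, by simp, by simp, by simp⟩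
      smul_mem' := by
        rintro c x ⟨hx1, hx2, hx3, hx4⟩
        exact ⟨Submodule.smul_mem _ _ hx1,
          by rw [map_smul]; exact Submodule.smul_mem _ _ hx2,
          by rw [map_smul, map_smul, map_smul, map_smul, hx3],
          by rw [map_smul, map_smul, hx4]⟩ }
  have hMmul : ∀ (i j : ℤ) (x y : AG), x ∈ M i → y ∈ M j → x * y ∈ M (i + j) := by
    rintro i j x y ⟨hx1, hx2, hx3, hx4⟩ ⟨hy1, hy2, hy3, hy4⟩
    refine ⟨SetLike.mul_mem_graded hx1 hy1, ?_, ?_, ?_⟩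
    · rw [map_mul]; exact SetLike.mul_mem_graded hx2 hy2
    · rw [hLeibG i x y hx1, map_mul, hLeibA i (φ x) (φ y) hx2, map_add, map_mul,
        map_zsmul, map_mul, hx3, hy3]
    · rw [map_mul, map_mul, hx4, hy4]
  -- generators lie in the appropriate M i
  have hMidem : ∀ v, idem v ∈ M 0 := fun v =>
    ⟨hidemdeg v, by rw [hφidem]; exact hidemAdeg v,
      by rw [hdGidem, map_zero, hφidem, hdAidem],
      by rw [hφidem, hτidem]⟩
  have hMg : ∀ e, g e ∈ M 0 := fun e =>
    ⟨hgdeg e, by rw [hφg]; exact hgAdeg e,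
      by rw [hdGg, map_zero, hφg, hdAg],
      by rw [hφg, hτg]⟩
  have hMgs : ∀ e, gs e ∈ M (2 - n) := fun e =>
    ⟨hgsdeg e, by rw [hφgs]; exact hgsAdeg e,
      by rw [hdGgs, map_zero, hφgs, hdAgs],
      by rw [hφgs, hτgs]⟩
  have hMh : ∀ v, h v ∈ M (1 - n) := by
    intro v
    refine ⟨hhdeg v, ?_, ?_, ?_⟩
    · rw [hφh]
      exact sub_mem (hadeg v)
        (add_mem (Submodule.sum_mem _ fun e _ => ha1deg e)
          (Submodule.sum_mem _ fun e _ => ha2deg e))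
    · rw [hdGh, hφh]
      simp only [map_sub, map_add, map_sum, map_mul, hφg, hφgs, hdAa, hdAa1, hdAa2,
        Finset.sum_sub_distrib, Finset.sum_add_distrib]
      abel
    · rw [hφh]
      simp only [map_sub, map_add, map_sum, hτa, hτa1, hτa2, Finset.sum_const_zero,
        add_zero, sub_zero]
  -- the supremum is everything
  have hTtop : ∀ x : AG, x ∈ ⨆ i, M i := by
    have hmulT : ∀ x y : AG, x ∈ (⨆ i, M i) → y ∈ (⨆ i, M i) → x * y ∈ (⨆ i, M i) := by
      intro x y hx hy
      refine Submodule.iSup_induction M hx (motive := fun x => x * y ∈ (⨆ i, M i)) ?_ ?_ ?_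
      · intro i x hxi
        refine Submodule.iSup_induction M hy (motive := fun y => x * y ∈ (⨆ i, M i)) ?_ ?_ ?_
        · intro j y hyj
          exact Submodule.mem_iSup_of_mem (i + j) (hMmul i j x y hxi hyj)
        · show x * 0 ∈ (⨆ i, M i); rw [mul_zero]; exact zero_mem _
        · intro y z hy hz; show x * (y + z) ∈ (⨆ i, M i); rw [mul_add]; exact add_mem hy hz
      · show 0 * y ∈ (⨆ i, M i); rw [zero_mul]; exact zero_mem _
      · intro x z hx hz; show (x + z) * y ∈ (⨆ i, M i); rw [add_mul]; exact add_mem hx hz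
    have h1M : (1 : AG) ∈ M 0 :=
      ⟨h1G, by rw [map_one]; exact h1A, by rw [hdG1, map_zero, map_one, hdA1], by rw [map_one, map_one]⟩
    have hS : Algebra.adjoin k
        (Set.range idem ∪ Set.range g ∪ Set.range gs ∪ Set.range h) ≤
        Submodule.toSubalgebra (⨆ i, M i) (Submodule.mem_iSup_of_mem 0 h1M) hmulT := by
      rw [Algebra.adjoin_le_iff]
      rintro x (((⟨v, rfl⟩ | ⟨e, rfl⟩) | ⟨e, rfl⟩) | ⟨v, rfl⟩)
      · exact Submodule.mem_iSup_of_mem 0 (hMidem v)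
      · exact Submodule.mem_iSup_of_mem 0 (hMg e)
      · exact Submodule.mem_iSup_of_mem (2 - n) (hMgs e)
      · exact Submodule.mem_iSup_of_mem (1 - n) (hMh v)
    rw [hgenG] at hS
    intro x
    exact hS (Algebra.mem_top (R := k) (A := AG))
  refine ⟨?_, ?_, ?_⟩
  · intro i x hx
    have key : ∀ j : ℤ, φ ((DirectSum.decompose 𝒢 x j : AG)) ∈ 𝒜 j := by
      refine Submodule.iSup_induction M (hTtop x)
        (motive := fun y => ∀ j : ℤ, φ ((DirectSum.decompose 𝒢 y j : AG)) ∈ 𝒜 j) ?_ ?_ ?_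
      · rintro i0 y ⟨hy1, hy2, -, -⟩ j
        rcases eq_or_ne i0 j with rfl | hne
        · rwa [DirectSum.decompose_of_mem_same 𝒢 hy1]
        · rw [DirectSum.decompose_of_mem_ne 𝒢 hy1 hne, map_zero]; exact zero_mem _
      · intro j; simp
      · intro y z hy hz j
        rw [DirectSum.decompose_add, DirectSum.add_apply, Submodule.coe_add, map_add]
        exact add_mem (hy j) (hz j)
    have := key i
    rwa [DirectSum.decompose_of_mem_same 𝒢 hx] at this
  · intro x
    refine Submodule.iSup_induction M (hTtop x)
      (motive := fun y => φ (dG y) = dA (φ y)) ?_ ?_ ?_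
    · rintro i0 y ⟨-, -, hy3, -⟩; exact hy3
    · simp
    · intro y z hy hz
      rw [map_add, map_add, map_add, map_add, hy, hz]
  · intro x
    refine Submodule.iSup_induction M (hTtop x)
      (motive := fun y => τ (φ y) = y) ?_ ?_ ?_
    · rintro i0 y ⟨-, -, -, hy4⟩; exact hy4
    · simp
    · intro y z hy hz
      rw [map_add, map_add, hy, hz]
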